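/- Let N = (V, E, c) be a network, let F = {f_1, …, f_n} be a finite set of flows on N with priority function P, and for each i let paths(f_i) be a finite list that enumerates all simple valid paths for f_i. Suppose (α, ρ, ε) is an ILP assignment for this data satisfying constraints (i)–(iv) that maximizes the objective Σ_{i=1}^{n} P(f_i)·α_i among all ILP assignments satisfying (i)–(iv), and let S be the mapping sending f_i to paths(f_i)_m whenever ρ_{i,m} = 1 and to the empty path otherwise. Then S is a feasible mapping, and for every feasible mapping M one has Σ_{f admitted by M} P(f) ≤ Σ_{f admitted by S} P(f). -/

import Mathlib

/-- A network flow: source node, destination node, and required bandwidth. -/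
structure NetFlow (V : Type) where
  s : V
  d : V
  b : ℕ

/-- The list of nodes visited by a path (a path is a list of directed edges). -/
def pathNodes {V : Type} : List (V × V) → List V
  | [] => []
  | e :: rest => e.1 :: (e :: rest).map Prod.snd

/-- A path is simple if it visits no node twice. -/
def IsSimplePath {V : Type} (p : List (V × V)) : Prop :=
  (pathNodes p).Nodup

/-- A (nonempty) path is valid for source `s` and destination `d` in edge set `E`:
all its edges lie in `E`, it starts at `s`, ends at `d`, and is connected. -/
def IsValidPath {V : Type} (E : Finset (V × V)) (s d : V) (p : List (V × V)) : Prop :=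
  p ≠ [] ∧ (∀ e ∈ p, e ∈ E) ∧ p.head?.map Prod.fst = some s ∧
    p.getLast?.map Prod.snd = some d ∧ p.Chain' (fun e e' => e.2 = e'.1)

/-- A mapping `S` of flows to paths (the empty path `[]` meaning the flow is dropped) is
feasible if every assigned path is simple and valid for its flow, and for every edge the
total bandwidth of the flows routed through it does not exceed its capacity. -/
def Feasible {V : Type} [DecidableEq V] {n : ℕ} (E : Finset (V × V)) (c : V × V → ℕ)
    (f : Fin n → NetFlow V) (S : Fin n → List (V × V)) : Prop :=
  (∀ i, S i = [] ∨ (IsSimplePath (S i) ∧ IsValidPath E (f i).s (f i).d (S i))) ∧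
  ∀ e ∈ E, (∑ i, if e ∈ S i then (f i).b else 0) ≤ c e

/-- The ILP constraints (binarity of all variables together with constraints (i)–(iv)). -/
def ILPConstraints {V : Type} {n : ℕ} (E : Finset (V × V)) (c : V × V → ℕ)
    (f : Fin n → NetFlow V) (paths : Fin n → List (List (V × V)))
    (α : Fin n → ℕ) (ρ : (i : Fin n) → Fin (paths i).length → ℕ)
    (ε : Fin n → V × V → ℕ) : Prop :=
  (∀ i, α i ≤ 1) ∧ (∀ i m, ρ i m ≤ 1) ∧ (∀ i e, ε i e ≤ 1) ∧
  -- (i) a flow is admitted iff exactly one of its candidate paths is chosen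
  (∀ i, (∑ m, ρ i m) = α i) ∧
  -- (ii) if a path is chosen, all its edges must route the flow
  (∀ i (m : Fin (paths i).length),
      ((paths i).get m).length * ρ i m ≤ (((paths i).get m).map (ε i)).sum) ∧
  -- (iii) capacity of every edge is respected
  (∀ e ∈ E, (∑ i, (f i).b * ε i e) ≤ c e) ∧
  -- (iv) edges not occurring in any candidate path of a flow cannot route it
  (∀ i e, (∀ p ∈ paths i, e ∉ p) → ε i e = 0)

/-- The total priority of the flows admitted by a mapping `S`. -/
def admittedPriority {V : Type} [DecidableEq V] {n : ℕ} (P : NetFlow V → ℕ)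
    (f : Fin n → NetFlow V) (S : Fin n → List (V × V)) : ℕ :=
  ∑ i, if S i ≠ [] then P (f i) else 0


private lemma sum_le_length' {l : List ℕ} (h : ∀ x ∈ l, x ≤ 1) : l.sum ≤ l.length := by
  induction l with
  | nil => simp
  | cons a t ih =>
    simp only [List.sum_cons, List.length_cons]
    have := h a (by simp)
    have := ih (fun x hx => h x (by simp [hx]))
    omega

private lemma all_eq_one {l : List ℕ} (h : ∀ x ∈ l, x ≤ 1) (h2 : l.length ≤ l.sum) :
    ∀ x ∈ l, x = 1 := by
  induction l with
  | nil => simp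
  | cons a t ih =>
    have ha := h a (by simp)
    have ht : ∀ x ∈ t, x ≤ 1 := fun x hx => h x (by simp [hx])
    have hts := sum_le_length' ht
    simp only [List.sum_cons, List.length_cons] at h2
    intro x hx
    rcases List.mem_cons.1 hx with rfl | hx
    · omega
    · exact ih ht (by omega) x hx

/-- An optimal ILP assignment satisfying (i)–(iv) induces a feasible mapping `S` whose
total admitted priority is maximal among all feasible mappings. -/
theorem ilp_optimal_solution_is_optimal_pfar {V : Type} [DecidableEq V] {n : ℕ}
    (E : Finset (V × V)) (c : V × V → ℕ) (f : Fin n → NetFlow V) (P : NetFlow V → ℕ)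
    (paths : Fin n → List (List (V × V)))
    -- `paths i` enumerates all simple valid paths for the flow `f i`
    (hpaths : ∀ i p, p ∈ paths i ↔ IsSimplePath p ∧ IsValidPath E (f i).s (f i).d p)
    (α : Fin n → ℕ) (ρ : (i : Fin n) → Fin (paths i).length → ℕ)
    (ε : Fin n → V × V → ℕ)
    (hILP : ILPConstraints E c f paths α ρ ε)
    -- the assignment maximizes the objective among all ILP assignments
    (hmax : ∀ (α' : Fin n → ℕ) (ρ' : (i : Fin n) → Fin (paths i).length → ℕ)
        (ε' : Fin n → V × V → ℕ), ILPConstraints E c f paths α' ρ' ε' →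
        (∑ i, P (f i) * α' i) ≤ ∑ i, P (f i) * α i)
    (S : Fin n → List (V × V))
    -- `S` sends `f i` to `paths(f_i)_m` whenever `ρ i m = 1`, and to the empty path otherwise
    (hS₁ : ∀ i m, ρ i m = 1 → S i = (paths i).get m)
    (hS₂ : ∀ i, (∀ m, ρ i m ≠ 1) → S i = []) :
    Feasible E c f S ∧
      ∀ M : Fin n → List (V × V), Feasible E c f M →
        admittedPriority P f M ≤ admittedPriority P f S := by

  obtain ⟨hα, hρ, hε, hsum, hii, hcap, hiv⟩ := hILP
  -- key: for each i with S i ≠ [], there is m with ρ i m = 1 and S i = (paths i).get m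
  have key : ∀ i, S i ≠ [] → ∃ m, ρ i m = 1 ∧ S i = (paths i).get m := by
    intro i hne
    by_contra h
    push_neg at h
    exact hne (hS₂ i (fun m hm => by
      rcases h m hm with h'
      exact h' (hS₁ i m hm)))
  -- edges of S i have ε i e = 1
  have keyε : ∀ i, ∀ e ∈ S i, ε i e = 1 := by
    intro i e he
    have hne : S i ≠ [] := by intro h0; rw [h0] at he; simp at he
    obtain ⟨m, hm1, hm2⟩ := key i hne
    have hc := hii i m
    rw [hm1, mul_one] at hc
    have hlen : (((paths i).get m).map (ε i)).length = ((paths i).get m).length := by simp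
    have hall := all_eq_one (l := ((paths i).get m).map (ε i))
      (by intro x hx; obtain ⟨e', _, rfl⟩ := List.mem_map.1 hx; exact hε i e')
      (by rw [hlen]; exact hc)
    exact hall (ε i e) (List.mem_map.2 ⟨e, hm2 ▸ he, rfl⟩)
  have feasS : Feasible E c f S := by
    constructor
    · intro i
      by_cases hne : S i = []
      · exact Or.inl hne
      · obtain ⟨m, _, hm2⟩ := key i hne
        right
        rw [hm2]
        exact (hpaths i _).1 ((paths i).get_mem _)
    · intro e he
      refine le_trans (Finset.sum_le_sum fun i _ => ?_) (hcap e he)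
      by_cases h : e ∈ S i
      · simp [h, keyε i e h]
      · simp [h]
  refine ⟨feasS, ?_⟩
  intro M hM
  -- build ILP assignment from M
  obtain ⟨hM1, hM2⟩ := hM
  have hMmem : ∀ i, M i ≠ [] → M i ∈ paths i := by
    intro i hne
    rcases hM1 i with h | h
    · exact absurd h hne
    · exact (hpaths i _).2 h
  classical
  have hex : ∀ i, M i ≠ [] → ∃ m : Fin (paths i).length, (paths i).get m = M i :=
    fun i h => List.mem_iff_get.1 (hMmem i h)
  choose idx hidx using hex
  set α' : Fin n → ℕ := fun i => if M i ≠ [] then 1 else 0 with hα'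
  set ρ' : (i : Fin n) → Fin (paths i).length → ℕ := fun i m =>
    if h : M i ≠ [] then (if m = idx i h then 1 else 0) else 0 with hρ'
  set ε' : Fin n → V × V → ℕ := fun i e => if e ∈ M i then 1 else 0 with hε'
  have hconstr : ILPConstraints E c f paths α' ρ' ε' := by
    refine ⟨fun i => by simp only [hα']; split <;> omega,
      fun i m => by simp only [hρ']; split <;> [skip; omega]; split <;> omega,
      fun i e => by simp only [hε']; split <;> omega, ?_, ?_, ?_, ?_⟩
    · intro i
      by_cases hne : M i = []
      · simp [hα', hρ', hne]
      · simp only [hα', hρ', hne, ne_eq, not_false_eq_true, dif_pos, if_true]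
        rw [Finset.sum_ite_eq' Finset.univ (idx i hne) (fun _ => 1)]
        simp
    · intro i m
      by_cases hne : M i = []
      · simp [hρ', hne]
      · by_cases hm : m = idx i (by exact hne)
        · subst hm
          simp only [hρ', hne, ne_eq, not_false_eq_true, dif_pos, if_pos rfl, mul_one,
            hidx i hne, hε']
          have : ((M i).map fun e => if e ∈ M i then 1 else 0).sum = (M i).length := by
            rw [List.sum_eq_card_nsmul _ 1]
            · simp
            · intro x hx
              obtain ⟨e, he, rfl⟩ := List.mem_map.1 hx
              simp [he]
          simp [this]
        · simp [hρ', hne, hm]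
    · intro e he
      refine le_trans (le_of_eq ?_) (hM2 e he)
      refine Finset.sum_congr rfl fun i _ => ?_
      simp only [hε']
      split <;> simp
    · intro i e hne
      simp only [hε']
      by_cases h : M i = []
      · simp [h]
      · simp [hne (M i) (hMmem i h)]
  have hobj := hmax α' ρ' ε' hconstr
  have hL : admittedPriority P f M = ∑ i, P (f i) * α' i := by
    refine Finset.sum_congr rfl fun i _ => ?_
    simp only [hα']
    split <;> simp
  have hR : (∑ i, P (f i) * α i) ≤ admittedPriority P f S := by
    refine Finset.sum_le_sum fun i _ => ?_
    by_cases h : α i = 0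
    · simp [h]
    · have hα1 : α i = 1 := by have := hα i; omega
      have : ∃ m, ρ i m = 1 := by
        by_contra hc
        push_neg at hc
        have : (∑ m, ρ i m) = 0 := Finset.sum_eq_zero fun m _ => by
          have := hρ i m; have := hc m; omega
        rw [hsum i, hα1] at this; omega
      obtain ⟨m, hm⟩ := this
      have hSne : S i ≠ [] := by
        rw [hS₁ i m hm]
        exact ((hpaths i _).1 ((paths i).get_mem _)).2.1
      simp [hSne, hα1]
  calc admittedPriority P f M = ∑ i, P (f i) * α' i := hL
    _ ≤ ∑ i, P (f i) * α i := hobj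
    _ ≤ admittedPriority P f S := hR
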